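/- The birthday of a product of finite-born surreal forms depends only on the birthdays of the factors: if x, x', y, y' are finite-born numeric pregames with g(x) = g(x') and g(y) = g(y'), then g(x·y) = g(x'·y'). -/

import Mathlib

universe u

namespace SetTheory

/-- Pre-games (removed from Mathlib; reproduced here with the December 2024 Mathlib meaning). -/
inductive PGame : Type (u + 1)
  | mk : ∀ α β : Type u, (α → PGame) → (β → PGame) → PGame

namespace PGame

/-- Simultaneous definition of `≤` (first component) and `⧏` (second component). -/
noncomputable def leLF (x : PGame.{u}) : PGame.{u} → Prop × Prop :=
  PGame.rec (motive := fun _ => PGame.{u} → Prop × Prop)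
    (fun _ _ _ _ IHxL IHxR y =>
      PGame.rec (motive := fun _ => Prop × Prop)
        (fun yl yr yL yR IHyL IHyR =>
          ((∀ i, (IHxL i (mk yl yr yL yR)).2) ∧ ∀ j, (IHyR j).2,
           (∃ j, (IHyL j).1) ∨ ∃ i, (IHxR i (mk yl yr yL yR)).1)) y) x

instance : LE PGame.{u} := ⟨fun x y => (leLF x y).1⟩

/-- `x ⧏ y` is defined as `¬ y ≤ x`, as in Mathlib. -/
def LF (x y : PGame.{u}) : Prop := ¬y ≤ x

instance : LT PGame.{u} := ⟨fun x y => x ≤ y ∧ LF x y⟩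

def Numeric : PGame.{u} → Prop
  | ⟨_, _, L, R⟩ => (∀ i j, L i < R j) ∧ (∀ i, Numeric (L i)) ∧ ∀ j, Numeric (R j)

def neg : PGame.{u} → PGame.{u}
  | ⟨l, r, L, R⟩ => ⟨r, l, fun i => neg (R i), fun i => neg (L i)⟩

instance : Neg PGame.{u} := ⟨neg⟩

noncomputable def add (x : PGame.{u}) : PGame.{u} → PGame.{u} :=
  PGame.rec (motive := fun _ => PGame.{u} → PGame.{u})
    (fun xl xr _ _ IHxl IHxr y =>
      PGame.rec (motive := fun _ => PGame.{u})
        (fun yl yr yL yR IHyl IHyr =>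
          mk (xl ⊕ yl) (xr ⊕ yr)
            (Sum.rec (fun i => IHxl i (mk yl yr yL yR)) (fun i => IHyl i))
            (Sum.rec (fun i => IHxr i (mk yl yr yL yR)) (fun i => IHyr i))) y) x

noncomputable instance : Add PGame.{u} := ⟨add⟩

noncomputable instance : Sub PGame.{u} := ⟨fun x y => x + -y⟩

noncomputable def mul (x : PGame.{u}) : PGame.{u} → PGame.{u} :=
  PGame.rec (motive := fun _ => PGame.{u} → PGame.{u})
    (fun xl xr _ _ IHxl IHxr y =>
      PGame.rec (motive := fun _ => PGame.{u})
        (fun yl yr yL yR IHyl IHyr =>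
          mk ((xl × yl) ⊕ (xr × yr)) ((xl × yr) ⊕ (xr × yl))
            (Sum.rec (fun p => IHxl p.1 (mk yl yr yL yR) + IHyl p.2 - IHxl p.1 (yL p.2))
              (fun p => IHxr p.1 (mk yl yr yL yR) + IHyr p.2 - IHxr p.1 (yR p.2)))
            (Sum.rec (fun p => IHxl p.1 (mk yl yr yL yR) + IHyr p.2 - IHxl p.1 (yR p.2))
              (fun p => IHxr p.1 (mk yl yr yL yR) + IHyl p.2 - IHxr p.1 (yL p.2)))) y) x

noncomputable instance : Mul PGame.{u} := ⟨mul⟩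

noncomputable def birthday : PGame.{u} → Ordinal.{u}
  | ⟨_, _, xL, xR⟩ =>
    max (Ordinal.lsub.{u, u} fun i => birthday (xL i)) (Ordinal.lsub.{u, u} fun i => birthday (xR i))

end PGame

end SetTheory

namespace SetTheory.PGame

def LeftMoves : PGame.{u} → Type u
  | mk l _ _ _ => l

def RightMoves : PGame.{u} → Type u
  | mk _ r _ _ => r

def moveLeft : (x : PGame.{u}) → x.LeftMoves → PGame.{u}
  | mk _ _ L _ => L

def moveRight : (x : PGame.{u}) → x.RightMoves → PGame.{u}
  | mk _ _ _ R => R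

theorem birthday_def (x : PGame.{u}) : x.birthday =
    max (Ordinal.lsub.{u, u} fun i => (x.moveLeft i).birthday)
      (Ordinal.lsub.{u, u} fun j => (x.moveRight j).birthday) := by
  cases x
  exact birthday.eq_1 _ _ _ _

theorem birthday_moveLeft_lt {x : PGame.{u}} (i : x.LeftMoves) :
    (x.moveLeft i).birthday < x.birthday := by
  rw [birthday_def x]
  exact lt_max_of_lt_left (Ordinal.lt_lsub (fun i => (x.moveLeft i).birthday) i)

theorem birthday_moveRight_lt {x : PGame.{u}} (j : x.RightMoves) :
    (x.moveRight j).birthday < x.birthday := by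
  rw [birthday_def x]
  exact lt_max_of_lt_right (Ordinal.lt_lsub (fun j => (x.moveRight j).birthday) j)

theorem lt_birthday_iff {x : PGame.{u}} {o : Ordinal.{u}} : o < x.birthday ↔
    (∃ i : x.LeftMoves, o ≤ (x.moveLeft i).birthday) ∨
      ∃ j : x.RightMoves, o ≤ (x.moveRight j).birthday := by
  rw [birthday_def, lt_max_iff, Ordinal.lt_lsub_iff, Ordinal.lt_lsub_iff]

theorem birthday_eq_iff {x : PGame.{u}} {o : Ordinal.{u}} : x.birthday = o ↔
    (∀ i, (x.moveLeft i).birthday < o) ∧ (∀ j, (x.moveRight j).birthday < o) ∧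
      ∀ c < o, (∃ i, c ≤ (x.moveLeft i).birthday) ∨ ∃ j, c ≤ (x.moveRight j).birthday := by
  constructor
  · rintro rfl
    exact ⟨birthday_moveLeft_lt, birthday_moveRight_lt, fun c hc => lt_birthday_iff.1 hc⟩
  · rintro ⟨h1, h2, h3⟩
    apply le_antisymm
    · rw [birthday_def, max_le_iff, Ordinal.lsub_le_iff, Ordinal.lsub_le_iff]
      exact ⟨h1, h2⟩
    · by_contra h
      rcases h3 _ (lt_of_not_ge h) with ⟨i, hi⟩ | ⟨j, hj⟩
      · exact absurd (birthday_moveLeft_lt i) (not_lt_of_ge hi)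
      · exact absurd (birthday_moveRight_lt j) (not_lt_of_ge hj)

theorem birthday_eq_zero {x : PGame.{u}} :
    x.birthday = 0 ↔ IsEmpty x.LeftMoves ∧ IsEmpty x.RightMoves := by
  constructor
  · intro h
    refine ⟨⟨fun i => ?_⟩, ⟨fun j => ?_⟩⟩
    · have := birthday_moveLeft_lt i
      rw [h] at this
      exact absurd this (not_lt_of_ge zero_le)
    · have := birthday_moveRight_lt j
      rw [h] at this
      exact absurd this (not_lt_of_ge zero_le)
  · rintro ⟨h1, h2⟩
    apply le_antisymm _ zero_le
    rw [birthday_def, max_le_iff, Ordinal.lsub_le_iff, Ordinal.lsub_le_iff]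
    exact ⟨fun i => isEmptyElim i, fun j => isEmptyElim j⟩

theorem bday_nat_of_lt {z : PGame.{u}} {a : ℕ} (h : z.birthday < (a : Ordinal)) :
    ∃ a' : ℕ, a' < a ∧ z.birthday = a' := by
  obtain ⟨a', ha⟩ := Ordinal.lt_omega0.1 (h.trans (Ordinal.natCast_lt_omega0 _))
  rw [ha, Nat.cast_lt] at h
  exact ⟨a', h, ha⟩

theorem exists_option_of_succ {x : PGame.{u}} {a : ℕ} (h : x.birthday = ((a + 1 : ℕ) : Ordinal)) :
    (∃ i, (x.moveLeft i).birthday = a) ∨ ∃ j, (x.moveRight j).birthday = a := by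
  have hlt : (a : Ordinal) < x.birthday := by rw [h, Nat.cast_lt]; omega
  rcases lt_birthday_iff.1 hlt with ⟨i, hi⟩ | ⟨j, hj⟩
  · obtain ⟨a', ha', h'⟩ := bday_nat_of_lt (h ▸ birthday_moveLeft_lt i)
    rw [h', Nat.cast_le] at hi
    exact Or.inl ⟨i, by rw [h']; congr 1; omega⟩
  · obtain ⟨a', ha', h'⟩ := bday_nat_of_lt (h ▸ birthday_moveRight_lt j)
    rw [h', Nat.cast_le] at hj
    exact Or.inr ⟨j, by rw [h']; congr 1; omega⟩

theorem birthday_neg (x : PGame.{u}) : (-x).birthday = x.birthday := by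
  induction x with
  | mk l r L R ihL ihR =>
    rw [show -(mk l r L R) = mk r l (fun i => -(R i)) (fun i => -(L i)) from rfl,
      birthday.eq_1, birthday.eq_1, max_comm]
    congr 1 <;> congr 1 <;> funext i
    · exact ihL i
    · exact ihR i

theorem birthday_add_nat : ∀ (s a b : ℕ) (x y : PGame.{u}), a + b = s →
    x.birthday = a → y.birthday = b → (x + y).birthday = ((a + b : ℕ) : Ordinal) := by
  intro s
  induction s using Nat.strong_induction_on with
  | _ s IH =>
  intro a b x y hs hx hy
  cases x with | mk xl xr xL xR =>
  cases y with | mk yl yr yL yR =>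
  rw [birthday_eq_iff]
  refine ⟨?_, ?_, ?_⟩
  · rintro (i|i)
    · obtain ⟨a', ha', h⟩ := bday_nat_of_lt (z := xL i)
        (by rw [← hx]; exact birthday_moveLeft_lt (x := mk xl xr xL xR) i)
      show (xL i + mk yl yr yL yR).birthday < _
      rw [IH (a' + b) (by omega) a' b _ _ rfl h hy, Nat.cast_lt]; omega
    · obtain ⟨b', hb', h⟩ := bday_nat_of_lt (z := yL i)
        (by rw [← hy]; exact birthday_moveLeft_lt (x := mk yl yr yL yR) i)
      show (mk xl xr xL xR + yL i).birthday < _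
      rw [IH (a + b') (by omega) a b' _ _ rfl hx h, Nat.cast_lt]; omega
  · rintro (i|i)
    · obtain ⟨a', ha', h⟩ := bday_nat_of_lt (z := xR i)
        (by rw [← hx]; exact birthday_moveRight_lt (x := mk xl xr xL xR) i)
      show (xR i + mk yl yr yL yR).birthday < _
      rw [IH (a' + b) (by omega) a' b _ _ rfl h hy, Nat.cast_lt]; omega
    · obtain ⟨b', hb', h⟩ := bday_nat_of_lt (z := yR i)
        (by rw [← hy]; exact birthday_moveRight_lt (x := mk yl yr yL yR) i)
      show (mk xl xr xL xR + yR i).birthday < _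
      rw [IH (a + b') (by omega) a b' _ _ rfl hx h, Nat.cast_lt]; omega
  · intro c hc
    obtain ⟨c', rfl⟩ := Ordinal.lt_omega0.1 (hc.trans (Ordinal.natCast_lt_omega0 _))
    rw [Nat.cast_lt] at hc
    rcases a with _ | a
    · obtain ⟨b', rfl⟩ : ∃ b', b = b' + 1 := ⟨b - 1, by omega⟩
      rcases exists_option_of_succ hy with ⟨j, hj⟩ | ⟨j, hj⟩
      · refine Or.inl ⟨Sum.inr j, ?_⟩
        show _ ≤ (mk xl xr xL xR + (mk yl yr yL yR).moveLeft j).birthday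
        rw [IH (0 + b') (by omega) 0 b' _ _ rfl hx hj, Nat.cast_le]; omega
      · refine Or.inr ⟨Sum.inr j, ?_⟩
        show _ ≤ (mk xl xr xL xR + (mk yl yr yL yR).moveRight j).birthday
        rw [IH (0 + b') (by omega) 0 b' _ _ rfl hx hj, Nat.cast_le]; omega
    · rcases exists_option_of_succ hx with ⟨i, hi⟩ | ⟨i, hi⟩
      · refine Or.inl ⟨Sum.inl i, ?_⟩
        show _ ≤ ((mk xl xr xL xR).moveLeft i + mk yl yr yL yR).birthday
        rw [IH (a + b) (by omega) a b _ _ rfl hi hy, Nat.cast_le]; omega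
      · refine Or.inr ⟨Sum.inl i, ?_⟩
        show _ ≤ ((mk xl xr xL xR).moveRight i + mk yl yr yL yR).birthday
        rw [IH (a + b) (by omega) a b _ _ rfl hi hy, Nat.cast_le]; omega

theorem leftMoves_mul (x y : PGame.{u}) : (x * y).LeftMoves =
    ((x.LeftMoves × y.LeftMoves) ⊕ (x.RightMoves × y.RightMoves)) := by
  cases x; cases y; rfl

theorem rightMoves_mul (x y : PGame.{u}) : (x * y).RightMoves =
    ((x.LeftMoves × y.RightMoves) ⊕ (x.RightMoves × y.LeftMoves)) := by
  cases x; cases y; rfl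

def toLeftMovesMul {x y : PGame.{u}} :
    ((x.LeftMoves × y.LeftMoves) ⊕ (x.RightMoves × y.RightMoves)) ≃ (x * y).LeftMoves :=
  Equiv.cast (leftMoves_mul x y).symm

def toRightMovesMul {x y : PGame.{u}} :
    ((x.LeftMoves × y.RightMoves) ⊕ (x.RightMoves × y.LeftMoves)) ≃ (x * y).RightMoves :=
  Equiv.cast (rightMoves_mul x y).symm

instance isEmpty_leftMoves_mul (x y : PGame.{u})
    [IsEmpty ((x.LeftMoves × y.LeftMoves) ⊕ (x.RightMoves × y.RightMoves))] :
    IsEmpty (x * y).LeftMoves :=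
  (toLeftMovesMul (x := x) (y := y)).symm.isEmpty

instance isEmpty_rightMoves_mul (x y : PGame.{u})
    [IsEmpty ((x.LeftMoves × y.RightMoves) ⊕ (x.RightMoves × y.LeftMoves))] :
    IsEmpty (x * y).RightMoves :=
  (toRightMovesMul (x := x) (y := y)).symm.isEmpty

theorem mul_moveLeft_inl {x y : PGame.{u}} {i : x.LeftMoves} {j : y.LeftMoves} :
    (x * y).moveLeft (toLeftMovesMul (Sum.inl (i, j))) =
      x.moveLeft i * y + x * y.moveLeft j - x.moveLeft i * y.moveLeft j := by
  cases x; cases y; rfl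

theorem mul_moveLeft_inr {x y : PGame.{u}} {i : x.RightMoves} {j : y.RightMoves} :
    (x * y).moveLeft (toLeftMovesMul (Sum.inr (i, j))) =
      x.moveRight i * y + x * y.moveRight j - x.moveRight i * y.moveRight j := by
  cases x; cases y; rfl

theorem mul_moveRight_inl {x y : PGame.{u}} {i : x.LeftMoves} {j : y.RightMoves} :
    (x * y).moveRight (toRightMovesMul (Sum.inl (i, j))) =
      x.moveLeft i * y + x * y.moveRight j - x.moveLeft i * y.moveRight j := by
  cases x; cases y; rfl

theorem mul_moveRight_inr {x y : PGame.{u}} {i : x.RightMoves} {j : y.LeftMoves} :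
    (x * y).moveRight (toRightMovesMul (Sum.inr (i, j))) =
      x.moveRight i * y + x * y.moveLeft j - x.moveRight i * y.moveLeft j := by
  cases x; cases y; rfl

@[elab_as_elim]
theorem leftMoves_mul_cases {x y : PGame.{u}} (k : (x * y).LeftMoves)
    {P : (x * y).LeftMoves → Prop}
    (hl : ∀ ix iy, P (toLeftMovesMul (Sum.inl (ix, iy))))
    (hr : ∀ jx jy, P (toLeftMovesMul (Sum.inr (jx, jy)))) : P k := by
  rw [← toLeftMovesMul.apply_symm_apply k]
  rcases toLeftMovesMul.symm k with ⟨ix, iy⟩ | ⟨jx, jy⟩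
  · exact hl ix iy
  · exact hr jx jy

@[elab_as_elim]
theorem rightMoves_mul_cases {x y : PGame.{u}} (k : (x * y).RightMoves)
    {P : (x * y).RightMoves → Prop}
    (hl : ∀ ix jy, P (toRightMovesMul (Sum.inl (ix, jy))))
    (hr : ∀ jx iy, P (toRightMovesMul (Sum.inr (jx, iy)))) : P k := by
  rw [← toRightMovesMul.apply_symm_apply k]
  rcases toRightMovesMul.symm k with ⟨ix, jy⟩ | ⟨jx, iy⟩
  · exact hl ix jy
  · exact hr jx iy

end SetTheory.PGame

open SetTheory PGame Ordinal

/-- The birthday of a product of finite-born forms, as a function of the factors' birthdays. -/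
def mulBday : ℕ → ℕ → ℕ
  | 0, _ => 0
  | _+1, 0 => 0
  | n+1, m+1 => mulBday n (m+1) + mulBday (n+1) m + mulBday n m + 1

lemma mulBday_zero_right : ∀ n, mulBday n 0 = 0
  | 0 => by simp [mulBday]
  | _+1 => by simp [mulBday]

lemma mulBday_succ_left (n m : ℕ) : mulBday n m ≤ mulBday (n+1) m := by
  cases m with
  | zero => simp [mulBday_zero_right]
  | succ m => rw [mulBday]; omega

lemma mulBday_succ_right (n m : ℕ) : mulBday n m ≤ mulBday n (m+1) := by
  cases n with
  | zero => simp [mulBday]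
  | succ n => rw [mulBday]; omega

lemma mulBday_mono {n n' m m' : ℕ} (h1 : n ≤ n') (h2 : m ≤ m') :
    mulBday n m ≤ mulBday n' m' :=
  (monotone_nat_of_le_succ (fun k => mulBday_succ_left k m) h1).trans
    (monotone_nat_of_le_succ (fun k => mulBday_succ_right n' k) h2)

lemma birthday_mul_eq : ∀ (k n m : ℕ) (x y : PGame), n + m ≤ k →
    x.birthday = n → y.birthday = m → (x * y).birthday = mulBday n m := by
  intro k
  induction k with
  | zero =>
    intro n m x y hk hx hy
    obtain rfl : n = 0 := by omega
    obtain rfl : m = 0 := by omega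
    rw [Nat.cast_zero, birthday_eq_zero] at hx hy
    have h1 := hx.1; have h2 := hx.2; have h3 := hy.1; have h4 := hy.2
    rw [show mulBday 0 0 = 0 by simp [mulBday], Nat.cast_zero, birthday_eq_zero]
    exact ⟨inferInstance, inferInstance⟩
  | succ k IH =>
    intro n m x y hk hx hy
    match n, m with
    | 0, m =>
      rw [Nat.cast_zero, birthday_eq_zero] at hx
      have h1 := hx.1; have h2 := hx.2
      rw [show mulBday 0 m = 0 by simp [mulBday], Nat.cast_zero, birthday_eq_zero]
      exact ⟨inferInstance, inferInstance⟩
    | n+1, 0 =>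
      rw [Nat.cast_zero, birthday_eq_zero] at hy
      have h3 := hy.1; have h4 := hy.2
      rw [mulBday_zero_right, Nat.cast_zero, birthday_eq_zero]
      exact ⟨inferInstance, inferInstance⟩
    | n+1, m+1 =>
      -- extract natural-number birthdays of options
      have hxopt : ∀ z : PGame, z.birthday < x.birthday → ∃ a : ℕ, a ≤ n ∧ z.birthday = a := by
        intro z hz
        rw [hx] at hz
        obtain ⟨a, ha⟩ := Ordinal.lt_omega0.1 (hz.trans (nat_lt_omega0 _))
        rw [ha] at hz ⊢
        exact ⟨a, by exact_mod_cast Nat.lt_succ_iff.1 (by exact_mod_cast hz), rfl⟩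
      have hyopt : ∀ z : PGame, z.birthday < y.birthday → ∃ b : ℕ, b ≤ m ∧ z.birthday = b := by
        intro z hz
        rw [hy] at hz
        obtain ⟨b, hb⟩ := Ordinal.lt_omega0.1 (hz.trans (nat_lt_omega0 _))
        rw [hb] at hz ⊢
        exact ⟨b, by exact_mod_cast Nat.lt_succ_iff.1 (by exact_mod_cast hz), rfl⟩
      -- birthday of a generic option of x * y
      have hopt : ∀ (u v : PGame) (a b : ℕ), a ≤ n → b ≤ m →
          u.birthday = a → v.birthday = b →
          (u * y + x * v - u * v).birthday
            = ((mulBday a (m+1) + mulBday (n+1) b + mulBday a b : ℕ) : Ordinal) := by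
        intro u v a b ha hb hu hv
        rw [show u * y + x * v - u * v = u * y + x * v + -(u * v) from rfl,
          birthday_add_nat _ _ _ _ _ rfl
            (birthday_add_nat _ _ _ _ _ rfl (IH a (m+1) u y (by omega) hu hy)
              (IH (n+1) b x v (by omega) hx hv))
            (by rw [birthday_neg]; exact IH a b u v (by omega) hu hv)]
      have hoptle : ∀ (u v : PGame) (a b : ℕ), a ≤ n → b ≤ m →
          u.birthday = a → v.birthday = b →
          (u * y + x * v - u * v).birthday < ((mulBday (n+1) (m+1) : ℕ) : Ordinal) := by
        intro u v a b ha hb hu hv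
        rw [hopt u v a b ha hb hu hv, Nat.cast_lt, mulBday]
        have h1 := mulBday_mono ha (le_refl (m+1))
        have h2 := mulBday_mono (le_refl (n+1)) hb
        have h3 := mulBday_mono ha hb
        omega
      apply le_antisymm
      · -- upper bound
        rw [birthday_def, max_le_iff]
        constructor <;> rw [Ordinal.lsub_le_iff] <;> intro i
        · induction i using leftMoves_mul_cases with
          | hl ix iy =>
            rw [mul_moveLeft_inl]
            obtain ⟨a, ha, hu⟩ := hxopt _ (birthday_moveLeft_lt ix)
            obtain ⟨b, hb, hv⟩ := hyopt _ (birthday_moveLeft_lt iy)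
            exact hoptle _ _ a b ha hb hu hv
          | hr jx jy =>
            rw [mul_moveLeft_inr]
            obtain ⟨a, ha, hu⟩ := hxopt _ (birthday_moveRight_lt jx)
            obtain ⟨b, hb, hv⟩ := hyopt _ (birthday_moveRight_lt jy)
            exact hoptle _ _ a b ha hb hu hv
        · induction i using rightMoves_mul_cases with
          | hl ix jy =>
            rw [mul_moveRight_inl]
            obtain ⟨a, ha, hu⟩ := hxopt _ (birthday_moveLeft_lt ix)
            obtain ⟨b, hb, hv⟩ := hyopt _ (birthday_moveRight_lt jy)
            exact hoptle _ _ a b ha hb hu hv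
          | hr jx iy =>
            rw [mul_moveRight_inr]
            obtain ⟨a, ha, hu⟩ := hxopt _ (birthday_moveRight_lt jx)
            obtain ⟨b, hb, hv⟩ := hyopt _ (birthday_moveLeft_lt iy)
            exact hoptle _ _ a b ha hb hu hv
      · -- lower bound: find an option of birthday exactly N
        have hN : ((mulBday (n+1) (m+1) : ℕ) : Ordinal)
            = ((mulBday n (m+1) + mulBday (n+1) m + mulBday n m : ℕ) : Ordinal) + 1 := by
          rw [mulBday]; push_cast; rfl
        set N : ℕ := mulBday n (m+1) + mulBday (n+1) m + mulBday n m with hNdef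
        rw [hN, Ordinal.add_one_eq_succ, Order.succ_le_iff, lt_birthday_iff]
        -- get an x-option of birthday exactly n and a y-option of birthday exactly m
        have hxw : (∃ i, (x.moveLeft i).birthday = (n : Ordinal)) ∨
            (∃ i, (x.moveRight i).birthday = (n : Ordinal)) := by
          have : (n : Ordinal) < x.birthday := by
            rw [hx]; exact_mod_cast Nat.lt_succ_self n
          rcases lt_birthday_iff.1 this with ⟨i, hi⟩ | ⟨i, hi⟩
          · refine Or.inl ⟨i, le_antisymm ?_ hi⟩
            have := birthday_moveLeft_lt i
            rw [hx, Nat.cast_succ, Order.lt_add_one_iff] at this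
            exact this
          · refine Or.inr ⟨i, le_antisymm ?_ hi⟩
            have := birthday_moveRight_lt i
            rw [hx, Nat.cast_succ, Order.lt_add_one_iff] at this
            exact this
        have hyw : (∃ j, (y.moveLeft j).birthday = (m : Ordinal)) ∨
            (∃ j, (y.moveRight j).birthday = (m : Ordinal)) := by
          have : (m : Ordinal) < y.birthday := by
            rw [hy]; exact_mod_cast Nat.lt_succ_self m
          rcases lt_birthday_iff.1 this with ⟨j, hj⟩ | ⟨j, hj⟩
          · refine Or.inl ⟨j, le_antisymm ?_ hj⟩
            have := birthday_moveLeft_lt j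
            rw [hy, Nat.cast_succ, Order.lt_add_one_iff] at this
            exact this
          · refine Or.inr ⟨j, le_antisymm ?_ hj⟩
            have := birthday_moveRight_lt j
            rw [hy, Nat.cast_succ, Order.lt_add_one_iff] at this
            exact this
        rcases hxw with ⟨i, hi⟩ | ⟨i, hi⟩ <;> rcases hyw with ⟨j, hj⟩ | ⟨j, hj⟩
        · exact Or.inl ⟨toLeftMovesMul (Sum.inl (i, j)), by
            rw [mul_moveLeft_inl, hopt _ _ n m le_rfl le_rfl hi hj]⟩
        · exact Or.inr ⟨toRightMovesMul (Sum.inl (i, j)), by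
            rw [mul_moveRight_inl, hopt _ _ n m le_rfl le_rfl hi hj]⟩
        · exact Or.inr ⟨toRightMovesMul (Sum.inr (i, j)), by
            rw [mul_moveRight_inr, hopt _ _ n m le_rfl le_rfl hi hj]⟩
        · exact Or.inl ⟨toLeftMovesMul (Sum.inr (i, j)), by
            rw [mul_moveLeft_inr, hopt _ _ n m le_rfl le_rfl hi hj]⟩

theorem birthday_mul_congr (x x' y y' : PGame)
    (hx : x.Numeric) (hx' : x'.Numeric) (hy : y.Numeric) (hy' : y'.Numeric)
    (hxf : x.birthday < Ordinal.omega0) (hx'f : x'.birthday < Ordinal.omega0)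
    (hyf : y.birthday < Ordinal.omega0) (hy'f : y'.birthday < Ordinal.omega0)
    (hxx : x.birthday = x'.birthday) (hyy : y.birthday = y'.birthday) :
    (x * y).birthday = (x' * y').birthday := by
  obtain ⟨n, hn⟩ := Ordinal.lt_omega0.1 hxf
  obtain ⟨m, hm⟩ := Ordinal.lt_omega0.1 hyf
  rw [birthday_mul_eq (n+m) n m x y le_rfl hn hm,
    birthday_mul_eq (n+m) n m x' y' le_rfl (hxx ▸ hn) (hyy ▸ hm)]
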